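/- Fix a rational number ξ with 0 < ξ < 1 and ξ ≠ 1/2, and set μ := min(ξ, 1−ξ). For positive integers n with nξ ∈ ℕ, set m := nξ and p_n(x) := (C(n,x) − C(n,x−1))/C(n,m) for integers 0 ≤ x ≤ min(m, n−m) (with C(n,−1) := 0), and p_n(x) := 0 otherwise. Then: (i) for each fixed i ∈ ℕ, lim_{n→∞} p_n(nμ − i) = (μ/(1−μ))^i · (1−2μ)/(1−μ), i.e. nμ − X asymptotically obeys the geometric distribution with parameter μ/(1−μ); (ii) lim_{n→∞} ( ∑_x x·p_n(x) − nμ ) = −μ/(1−2μ); (iii) writing E_n := ∑_x x·p_n(x), lim_{n→∞} ( ∑_x x²·p_n(x) − E_n² ) = μ(1−μ)/(1−2μ)². -/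

import Mathlib

set_option maxHeartbeats 1000000


open Finset

/-- The pmf `p(x) = (C(n,x) − C(n,x−1))/C(n,m)` of `P_{n,m,k,l}` in the case
`m−l = 0` or `n−m−k+l = 0`, supported on `0 ≤ x ≤ min(m, n−m)`
(with the convention `C(n,−1) = 0`). -/
noncomputable def dimPMF (n m x : ℕ) : ℚ :=
  if x ≤ min m (n - m) then
    ((n.choose x : ℚ) - (if x = 0 then 0 else (n.choose (x - 1) : ℚ))) / (n.choose m : ℚ)
  else 0



noncomputable def Rq (n M i : ℕ) : ℚ := (n.choose (M - i) : ℚ) / (n.choose M : ℚ)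

lemma Rq_nonneg (n M i : ℕ) : 0 ≤ Rq n M i := by unfold Rq; positivity

lemma Rq_zero (n M : ℕ) (h : M ≤ n) : Rq n M 0 = 1 := by
  have : (n.choose M : ℚ) ≠ 0 := by
    exact_mod_cast (Nat.choose_pos h).ne'
  simp [Rq, div_self this]

lemma Rq_step (n M i : ℕ) (hi : i < M) (hM : M ≤ n) :
    Rq n M (i + 1) * ((n : ℚ) - M + (i + 1)) = Rq n M i * ((M : ℚ) - i) := by
  have h1 : M - (i + 1) + 1 = M - i := by omega
  have key := Nat.choose_succ_right_eq n (M - (i + 1))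
  rw [h1, show n - (M - (i+1)) = n - M + (i+1) by omega] at key
  have keyQ := congrArg (fun t : ℕ => (t : ℚ)) key
  push_cast [Nat.cast_sub hi.le, Nat.cast_sub hM] at keyQ
  unfold Rq
  rw [div_mul_eq_mul_div, div_mul_eq_mul_div, ← keyQ]

open Finset

lemma Rq_bounds (μ : ℚ) (hμ0 : 0 < μ) (hμ2 : μ < 1/2) (n M : ℕ) (hn : 1 ≤ n)
    (hM : (M : ℚ) = n * μ) :
    ∀ i, i ≤ M → 0 ≤ Rq n M i ∧ Rq n M i ≤ (μ/(1-μ))^i ∧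
      (μ/(1-μ))^i - Rq n M i ≤ (i:ℚ)^2 / ((1-μ)^2 * n) := by
  have h1μ : 0 < 1 - μ := by linarith
  have hnQ : (1:ℚ) ≤ (n:ℚ) := by exact_mod_cast hn
  have hMn : M ≤ n := by
    have : (M:ℚ) ≤ (n:ℚ) := by nlinarith
    exact_mod_cast this
  set r : ℚ := μ/(1-μ) with hr
  have hr0 : 0 < r := by positivity
  have hr1 : r < 1 := by rw [hr, div_lt_one h1μ]; linarith
  have hc : (0:ℚ) < (1-μ)^2 * n := by positivity
  intro i
  induction i with
  | zero =>
    intro _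
    rw [Rq_zero n M hMn]
    norm_num
  | succ i ih =>
    intro hi1
    have hi : i < M := by omega
    obtain ⟨ih0, ih1, ih2⟩ := ih (by omega)
    have hiM : (i:ℚ) < (M:ℚ) := by exact_mod_cast hi
    have hD : (0:ℚ) < (n:ℚ) - M + (i+1) := by nlinarith
    obtain ⟨f, hre, hf0, hfr, hdiff⟩ : ∃ f : ℚ, Rq n M (i+1) = Rq n M i * f ∧ 0 ≤ f ∧
        f ≤ r ∧ r - f ≤ ((i:ℚ)+1) / ((1-μ)^2 * n) := by
      refine ⟨((M:ℚ) - i)/((n:ℚ) - M + (i+1)), ?_, ?_, ?_, ?_⟩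
      · have := Rq_step n M i hi hMn
        rw [mul_div_assoc', eq_div_iff hD.ne', this]
      · exact div_nonneg (by linarith) hD.le
      · rw [hr, div_le_div_iff₀ hD h1μ]
        nlinarith
      · have e : r - ((M:ℚ) - i)/((n:ℚ) - M + (i+1))
            = (μ + i)/((1-μ)*((n:ℚ) - M + (i+1))) := by
          rw [hr, div_sub_div _ _ h1μ.ne' hD.ne', hM]
          congr 1
          ring
        rw [e]
        apply div_le_div₀ (by positivity) (by linarith) hc
        nlinarith
    have hpow0 : (0:ℚ) ≤ r^i := by positivity
    have hpow1 : r^i ≤ 1 := pow_le_one₀ hr0.le hr1.le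
    refine ⟨by rw [hre]; exact mul_nonneg ih0 hf0, ?_, ?_⟩
    · rw [hre, pow_succ]
      exact mul_le_mul ih1 hfr hf0 (by positivity)
    · rw [hre, pow_succ]
      have key : r^i * r - Rq n M i * f = r^i * (r - f) + f * (r^i - Rq n M i) := by ring
      have b1 : r^i * (r - f) ≤ ((i:ℚ)+1) / ((1-μ)^2 * n) := by
        calc r^i * (r - f) ≤ 1 * ((r:ℚ) - f) := by nlinarith
          _ ≤ ((i:ℚ)+1) / ((1-μ)^2 * n) := by linarith
      have b2 : f * (r^i - Rq n M i) ≤ (i:ℚ)^2 / ((1-μ)^2 * n) := by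
        have h2 : 0 ≤ r^i - Rq n M i := by linarith
        calc f * (r^i - Rq n M i) ≤ 1 * (r^i - Rq n M i) := by nlinarith
          _ ≤ (i:ℚ)^2 / ((1-μ)^2 * n) := by linarith
      have hsum : ((i:ℚ)+1)/((1-μ)^2*n) + (i:ℚ)^2/((1-μ)^2*n) ≤ ((i:ℚ)+1)^2/((1-μ)^2*n) := by
        rw [← add_div, div_le_div_iff₀ hc hc]
        have : (0:ℚ) ≤ (i:ℚ) := by positivity
        nlinarith [mul_nonneg this hc.le]
      push_cast
      linarith [key, b1, b2, hsum]


lemma abel1 (c : ℕ → ℚ) (M : ℕ) :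
    ∑ x ∈ range (M+1), (x:ℚ) * (c x - (if x = 0 then 0 else c (x-1)))
      = M * c M - ∑ x ∈ range M, c x := by
  induction M with
  | zero => simp
  | succ M ih =>
    rw [sum_range_succ, ih, sum_range_succ]
    simp only [Nat.succ_ne_zero, if_false, Nat.add_sub_cancel]
    push_cast
    ring

lemma abel2 (c : ℕ → ℚ) (M : ℕ) :
    ∑ x ∈ range (M+1), (x:ℚ)^2 * (c x - (if x = 0 then 0 else c (x-1)))
      = (M:ℚ)^2 * c M - ∑ x ∈ range M, (2*(x:ℚ)+1) * c x := by
  induction M with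
  | zero => simp
  | succ M ih =>
    rw [sum_range_succ, ih, sum_range_succ]
    simp only [Nat.succ_ne_zero, if_false, Nat.add_sub_cancel]
    push_cast
    ring

lemma geom1 (r : ℚ) (hr : r ≠ 1) (N : ℕ) :
    ∑ i ∈ range N, r^(i+1) = (r - r^(N+1))/(1-r) := by
  have h1 : 1 - r ≠ 0 := by intro h; apply hr; linarith [h]
  induction N with
  | zero => simp
  | succ N ih =>
    rw [sum_range_succ, ih]
    field_simp
    ring

lemma geom2 (r : ℚ) (N : ℕ) :
    (1-r)^2 * ∑ i ∈ range N, ((i:ℚ)+1) * r^(i+1)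
      = r - ((N:ℚ)+1)*r^(N+1) + N*r^(N+2) := by
  induction N with
  | zero => simp
  | succ N ih =>
    rw [sum_range_succ, mul_add, ih]
    push_cast
    ring

lemma k_pow_le (t : ℚ) (h0 : 0 < t) (h1 : t < 1) (k : ℕ) : (k:ℚ) * t^k ≤ t/(1-t) := by
  have h1t : 0 < 1 - t := by linarith
  cases k with
  | zero => simp; positivity
  | succ k =>
    have hu : (0:ℚ) < t^(k+1) := by positivity
    have ha : (0:ℚ) ≤ (1-t)/t := by positivity
    have hb := one_add_mul_le_pow (by linarith : (-2:ℚ) ≤ (1-t)/t) (k+1)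
    have he : (1 + (1-t)/t) = 1/t := by field_simp; ring
    rw [he, div_pow, one_pow] at hb
    have hb' : ((k:ℚ)+1) * (1-t) / t ≤ 1 / t^(k+1) := by
      rw [mul_div_assoc]
      push_cast at hb ⊢
      linarith
    rw [div_le_div_iff₀ h0 hu] at hb'
    rw [le_div_iff₀ h1t]
    push_cast
    nlinarith [hb']

lemma choose_min_eq (n m : ℕ) (hmn : m ≤ n) :
    n.choose (min m (n - m)) = n.choose m := by
  rcases le_total m (n - m) with h | h
  · rw [min_eq_left h]
  · rw [min_eq_right h, Nat.choose_symm hmn]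

lemma dim_sum (g : ℕ → ℚ) (n m : ℕ) (hmn : m ≤ n) :
    ∑ x ∈ range (n+1), g x * dimPMF n m x =
      (∑ x ∈ range (min m (n-m) + 1),
        g x * ((n.choose x : ℚ) - if x = 0 then 0 else (n.choose (x-1) : ℚ)))
        / (n.choose (min m (n-m)) : ℚ) := by
  have hMn : min m (n - m) ≤ n := le_trans (min_le_left _ _) hmn
  rw [← Finset.sum_subset (Finset.range_subset_range.mpr (by omega : min m (n-m) + 1 ≤ n + 1))
    (by
      intro x _ hx
      rw [Finset.mem_range, not_lt] at hx
      rw [dimPMF, if_neg (by omega), mul_zero])]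
  rw [Finset.sum_div]
  apply Finset.sum_congr rfl
  intro x hx
  rw [Finset.mem_range] at hx
  rw [dimPMF, if_pos (by omega), choose_min_eq n m hmn]
  ring

lemma moment1 (n m : ℕ) (hmn : m ≤ n) :
    ∑ x ∈ range (n+1), (x:ℚ) * dimPMF n m x
      = ((min m (n-m) : ℕ) : ℚ)
        - ∑ i ∈ range (min m (n-m)), Rq n (min m (n-m)) (i+1) := by
  set M := min m (n-m) with hMdef
  have hMn : M ≤ n := le_trans (min_le_left _ _) hmn
  have hc : (n.choose M : ℚ) ≠ 0 := by exact_mod_cast (Nat.choose_pos hMn).ne'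
  rw [dim_sum (fun x => (x:ℚ)) n m hmn]
  rw [show (∑ x ∈ range (M + 1),
      (fun x => (x:ℚ)) x * ((n.choose x : ℚ) - if x = 0 then 0 else (n.choose (x-1) : ℚ)))
    = (M:ℚ) * (n.choose M : ℚ) - ∑ x ∈ range M, (n.choose x : ℚ) from abel1 _ M]
  rw [sub_div, mul_div_assoc, div_self hc, mul_one, Finset.sum_div]
  congr 1
  rw [← Finset.sum_range_reflect (fun x => (n.choose x : ℚ) / (n.choose M : ℚ)) M]
  apply Finset.sum_congr rfl
  intro i hi
  rw [Finset.mem_range] at hi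
  simp only [Rq]
  rw [show M - (i+1) = M - 1 - i from by omega]

lemma moment2 (n m : ℕ) (hmn : m ≤ n) :
    ∑ x ∈ range (n+1), (x:ℚ)^2 * dimPMF n m x
      = ((min m (n-m) : ℕ):ℚ)^2
        - (2*((min m (n-m) : ℕ):ℚ)+1) * (∑ i ∈ range (min m (n-m)), Rq n (min m (n-m)) (i+1))
        + 2 * ∑ i ∈ range (min m (n-m)), ((i:ℚ)+1) * Rq n (min m (n-m)) (i+1) := by
  set M := min m (n-m) with hMdef
  have hMn : M ≤ n := le_trans (min_le_left _ _) hmn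
  have hc : (n.choose M : ℚ) ≠ 0 := by exact_mod_cast (Nat.choose_pos hMn).ne'
  rw [dim_sum (fun x => (x:ℚ)^2) n m hmn]
  rw [show (∑ x ∈ range (M + 1),
      (fun x => (x:ℚ)^2) x * ((n.choose x : ℚ) - if x = 0 then 0 else (n.choose (x-1) : ℚ)))
    = (M:ℚ)^2 * (n.choose M : ℚ) - ∑ x ∈ range M, (2*(x:ℚ)+1) * (n.choose x : ℚ)
    from abel2 _ M]
  rw [sub_div, mul_div_assoc, div_self hc, mul_one, Finset.sum_div]
  have key : ∑ x ∈ range M, (2*(x:ℚ)+1) * (n.choose x : ℚ) / (n.choose M : ℚ)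
      = (2*(M:ℚ)+1) * (∑ i ∈ range M, Rq n M (i+1))
        - 2 * ∑ i ∈ range M, ((i:ℚ)+1) * Rq n M (i+1) := by
    rw [Finset.mul_sum, Finset.mul_sum, ← Finset.sum_sub_distrib]
    rw [← Finset.sum_range_reflect
      (fun x => (2*(x:ℚ)+1) * (n.choose x : ℚ) / (n.choose M : ℚ)) M]
    apply Finset.sum_congr rfl
    intro i hi
    rw [Finset.mem_range] at hi
    have e1 : ((M - 1 - i : ℕ):ℚ) = (M:ℚ) - 1 - i := by
      rw [show (M - 1 - i : ℕ) = M - (i+1) from by omega, Nat.cast_sub (by omega)]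
      push_cast; ring
    have e2 : (n.choose (M - 1 - i) : ℚ) = (n.choose (M - (i+1)) : ℚ) := by
      rw [show M - 1 - i = M - (i+1) from by omega]
    simp only [e1, e2, Rq]
    ring
  rw [key]
  ring

lemma geom_tail (r : ℚ) (h0 : 0 ≤ r) (h1 : r < 1) (I M : ℕ) (hIM : I ≤ M) :
    ∑ i ∈ Finset.Ico I M, r^(i+1) ≤ r^(I+1)/(1-r) := by
  have h1r : (0:ℚ) < 1 - r := by linarith
  have hsplit := Finset.sum_range_add_sum_Ico (fun i => r^(i+1)) hIM
  have e : ∑ i ∈ Finset.Ico I M, r^(i+1)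
      = ∑ i ∈ range M, r^(i+1) - ∑ i ∈ range I, r^(i+1) := by
    rw [← hsplit]; ring
  rw [e, geom1 r (by linarith) M, geom1 r (by linarith) I]
  rw [div_sub_div_same, div_le_div_iff₀ h1r h1r]
  have : (0:ℚ) ≤ r^(M+1) := by positivity
  nlinarith

lemma A_est (μ : ℚ) (hμ0 : 0 < μ) (hμ2 : μ < 1/2) (ε : ℚ) (hε : 0 < ε) :
    ∃ n₀ : ℕ, 1 ≤ n₀ ∧ ∀ n : ℕ, n₀ ≤ n → ∀ M : ℕ, (M:ℚ) = n * μ →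
      |(∑ i ∈ range M, Rq n M (i+1)) - μ/(1-2*μ)| < ε := by
  have h1μ : (0:ℚ) < 1 - μ := by linarith
  have h2μ : (0:ℚ) < 1 - 2*μ := by linarith
  set r : ℚ := μ/(1-μ) with hrdef
  have hr0 : 0 < r := by positivity
  have hr1 : r < 1 := by rw [hrdef, div_lt_one h1μ]; linarith
  have h1r : (0:ℚ) < 1 - r := by linarith
  have hα : μ/(1-2*μ) = r/(1-r) := by
    rw [hrdef, div_eq_div_iff h2μ.ne' (by rw [← hrdef]; exact h1r.ne')]
    have hcan : μ/(1-μ) * (1-μ) = μ := div_mul_cancel₀ _ h1μ.ne'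
    linear_combination -1 * hcan
  obtain ⟨I, hI⟩ := exists_pow_lt_of_lt_one (show (0:ℚ) < ε*(1-r)/4 by positivity) hr1
  clear_value r
  refine ⟨max (⌈(I:ℚ)/μ⌉₊ + 1) (⌈2*(I:ℚ)^3/(ε*(1-μ)^2)⌉₊ + 1),
    le_trans (by omega) (le_max_left _ _), ?_⟩
  intro n hn M hM
  have hn1 : 1 ≤ n := le_trans (le_trans (by omega) (le_max_left _ _)) hn
  have hnQ : (1:ℚ) ≤ (n:ℚ) := by exact_mod_cast hn1
  have hc : (0:ℚ) < (1-μ)^2 * n := by positivity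
  have hceil1 : (⌈(I:ℚ)/μ⌉₊ + 1 : ℕ) ≤ n := le_trans (le_max_left _ _) hn
  have hIM : I ≤ M := by
    have h1 : ((I:ℚ)/μ) ≤ (n:ℚ) := by
      calc ((I:ℚ)/μ) ≤ (⌈(I:ℚ)/μ⌉₊ : ℚ) := Nat.le_ceil _
        _ ≤ (n:ℚ) := Nat.cast_le.mpr (by omega)
    have : (I:ℚ) ≤ (M:ℚ) := by
      rw [hM]; rw [div_le_iff₀ hμ0] at h1; linarith
    exact_mod_cast this
  have hceil2 : (⌈2*(I:ℚ)^3/(ε*(1-μ)^2)⌉₊ + 1 : ℕ) ≤ n := le_trans (le_max_right _ _) hn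
  have hhead : (I:ℚ)^3 / ((1-μ)^2 * n) < ε/2 := by
    have h1 : 2*(I:ℚ)^3/(ε*(1-μ)^2) < (n:ℚ) := by
      calc 2*(I:ℚ)^3/(ε*(1-μ)^2) ≤ (⌈2*(I:ℚ)^3/(ε*(1-μ)^2)⌉₊ : ℚ) := Nat.le_ceil _
        _ < (n:ℚ) := Nat.cast_lt.mpr (by omega)
    rw [div_lt_iff₀ hc]
    rw [div_lt_iff₀ (by positivity : (0:ℚ) < ε*(1-μ)^2)] at h1
    nlinarith
  have hb := Rq_bounds μ hμ0 hμ2 n M hn1 hM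
  rw [← hrdef] at hb
  set A := ∑ i ∈ range M, Rq n M (i+1) with hA
  set S1 := ∑ i ∈ range I, (r^(i+1) - Rq n M (i+1)) with hS1
  set S2 := ∑ i ∈ Finset.Ico I M, (r^(i+1) - Rq n M (i+1)) with hS2
  have hsplit : S1 + S2 = ∑ i ∈ range M, (r^(i+1) - Rq n M (i+1)) :=
    Finset.sum_range_add_sum_Ico _ hIM
  have e1 : ∑ i ∈ range M, (r^(i+1) - Rq n M (i+1))
      = ∑ i ∈ range M, r^(i+1) - A := by
    rw [hA, Finset.sum_sub_distrib]
  have hT : μ/(1-2*μ) - ∑ i ∈ range M, r^(i+1) = r^(M+1)/(1-r) := by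
    rw [hα, geom1 r (by linarith) M, div_sub_div_same]
    congr 1
    ring
  have hkey : μ/(1-2*μ) - A = S1 + S2 + r^(M+1)/(1-r) := by
    linear_combination hT - hsplit - e1
  have hS1b : S1 ≤ (I:ℚ)^3 / ((1-μ)^2*n) := by
    calc S1 ≤ ∑ _i ∈ range I, (I:ℚ)^2/((1-μ)^2*n) := by
          apply Finset.sum_le_sum
          intro i hi
          rw [Finset.mem_range] at hi
          have h2 := (hb (i+1) (by omega)).2.2
          have hle : ((i+1:ℕ):ℚ)^2 ≤ (I:ℚ)^2 := by
            have h3 : ((i+1:ℕ):ℚ) ≤ (I:ℚ) := by exact_mod_cast (by omega : i+1 ≤ I)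
            have h4 : (0:ℚ) ≤ ((i+1:ℕ):ℚ) := by positivity
            nlinarith
          calc r^(i+1) - Rq n M (i+1) ≤ ((i+1:ℕ):ℚ)^2/((1-μ)^2*n) := by
                push_cast at h2 ⊢; linarith
            _ ≤ (I:ℚ)^2/((1-μ)^2*n) := by
                rw [div_le_div_iff₀ hc hc]; nlinarith
      _ = (I:ℚ)^3 / ((1-μ)^2*n) := by
          rw [Finset.sum_const, Finset.card_range, nsmul_eq_mul]
          field_simp
  have hS2b : S2 ≤ r^(I+1)/(1-r) := by
    calc S2 ≤ ∑ i ∈ Finset.Ico I M, r^(i+1) := by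
          apply Finset.sum_le_sum
          intro i _
          have := Rq_nonneg n M (i+1)
          linarith
      _ ≤ r^(I+1)/(1-r) := geom_tail r hr0.le hr1 I M hIM
  have hS10 : 0 ≤ S1 := by
    apply Finset.sum_nonneg
    intro i hi
    rw [Finset.mem_range] at hi
    have := (hb (i+1) (by omega)).2.1
    linarith
  have hS20 : 0 ≤ S2 := by
    apply Finset.sum_nonneg
    intro i hi
    rw [Finset.mem_Ico] at hi
    have := (hb (i+1) (by omega)).2.1
    linarith
  have hT0 : (0:ℚ) ≤ r^(M+1)/(1-r) := by positivity
  have hTb : r^(M+1)/(1-r) ≤ r^(I+1)/(1-r) := by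
    rw [div_le_div_iff₀ h1r h1r]
    have := pow_le_pow_of_le_one hr0.le hr1.le (by omega : I+1 ≤ M+1)
    nlinarith [pow_nonneg hr0.le (M+1)]
  have htail : r^(I+1)/(1-r) < ε/4 := by
    rw [div_lt_iff₀ h1r]
    have h5 : r^(I+1) ≤ r^I := by
      calc r^(I+1) = r^I * r := pow_succ r I
        _ ≤ r^I * 1 := by nlinarith [pow_nonneg hr0.le I]
        _ = r^I := mul_one _
    linarith
  rw [abs_sub_comm, abs_of_nonneg (by linarith)]
  linarith

lemma B_est (μ : ℚ) (hμ0 : 0 < μ) (hμ2 : μ < 1/2) (ε : ℚ) (hε : 0 < ε) :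
    ∃ n₀ : ℕ, 1 ≤ n₀ ∧ ∀ n : ℕ, n₀ ≤ n → ∀ M : ℕ, (M:ℚ) = n * μ →
      |(∑ i ∈ range M, ((i:ℚ)+1) * Rq n M (i+1)) - μ*(1-μ)/(1-2*μ)^2| < ε := by
  have h1μ : (0:ℚ) < 1 - μ := by linarith
  have h2μ : (0:ℚ) < 1 - 2*μ := by linarith
  set r : ℚ := μ/(1-μ) with hrdef
  have hr0 : 0 < r := by positivity
  have hr1 : r < 1 := by rw [hrdef, div_lt_one h1μ]; linarith
  have h1r : (0:ℚ) < 1 - r := by linarith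
  have hβ : μ*(1-μ)/(1-2*μ)^2 = r/(1-r)^2 := by
    rw [hrdef, div_eq_div_iff (pow_ne_zero 2 h2μ.ne')
      (by rw [← hrdef]; exact pow_ne_zero 2 h1r.ne')]
    have hcan : μ/(1-μ) * (1-μ) = μ := div_mul_cancel₀ _ h1μ.ne'
    linear_combination (μ * (μ/(1-μ)) - (1-μ)) * hcan
  -- geometric rate s and constant C
  set s : ℚ := (1+r)/2 with hsdef
  have hs0 : 0 < s := by positivity
  have hs1 : s < 1 := by rw [hsdef]; linarith
  have hrs : r < s := by rw [hsdef]; linarith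
  have h1s : (0:ℚ) < 1 - s := by linarith
  set t : ℚ := r/s with htdef
  have ht0 : 0 < t := by positivity
  have ht1 : t < 1 := by rw [htdef, div_lt_one hs0]; linarith
  set C : ℚ := t/(1-t) with hCdef
  have hC0 : 0 < C := by
    rw [hCdef]; apply div_pos ht0; linarith
  have hkb : ∀ k : ℕ, (k:ℚ) * r^k ≤ C * s^k := by
    intro k
    have h := k_pow_le t ht0 ht1 k
    have hts : t * s = r := by rw [htdef]; field_simp
    have h2 := mul_le_mul_of_nonneg_right h (by positivity : (0:ℚ) ≤ s^k)
    calc (k:ℚ) * r^k = (k:ℚ) * t^k * s^k := by rw [mul_assoc, ← mul_pow, hts]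
      _ ≤ t/(1-t) * s^k := h2
      _ = C * s^k := by rw [hCdef]
  set K : ℚ := C/(1-s) + C/(1-r)^2 + 1 with hKdef
  have hK0 : 0 < K := by rw [hKdef]; positivity
  obtain ⟨I, hI⟩ := exists_pow_lt_of_lt_one (show (0:ℚ) < ε/(2*K) by positivity) hs1
  clear_value K C t s
  have htail : C * (s^(I+1)/(1-s)) + C*s^I/(1-r)^2 < ε/2 := by
    have h5 : s^(I+1) ≤ s^I := by
      calc s^(I+1) = s^I * s := pow_succ s I
        _ ≤ s^I * 1 := by nlinarith [pow_nonneg hs0.le I]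
        _ = s^I := mul_one _
    have hsI0 : (0:ℚ) ≤ s^I := by positivity
    have h6 : C * (s^(I+1)/(1-s)) ≤ (C/(1-s)) * s^I := by
      have e5 : C * (s^(I+1)/(1-s)) = C*s^(I+1)/(1-s) := by ring
      have e6 : (C/(1-s)) * s^I = C*s^I/(1-s) := by ring
      rw [e5, e6, div_le_div_iff_of_pos_right h1s]
      exact mul_le_mul_of_nonneg_left h5 hC0.le
    have h7 : C*s^I/(1-r)^2 = (C/(1-r)^2) * s^I := by ring
    calc C * (s^(I+1)/(1-s)) + C*s^I/(1-r)^2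
        ≤ (C/(1-s))*s^I + (C/(1-r)^2)*s^I := by rw [h7]; linarith
      _ = s^I * (C/(1-s) + C/(1-r)^2) := by ring
      _ ≤ s^I * K := by
          apply mul_le_mul_of_nonneg_left ?_ hsI0
          rw [hKdef]
          linarith
      _ < (ε/(2*K)) * K := mul_lt_mul_of_pos_right hI hK0
      _ = ε/2 := by field_simp
  refine ⟨max (⌈(I:ℚ)/μ⌉₊ + 1) (⌈2*(I:ℚ)^4/(ε*(1-μ)^2)⌉₊ + 1),
    le_trans (by omega) (le_max_left _ _), ?_⟩
  intro n hn M hM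
  have hn1 : 1 ≤ n := le_trans (le_trans (by omega) (le_max_left _ _)) hn
  have hnQ : (1:ℚ) ≤ (n:ℚ) := by exact_mod_cast hn1
  have hc : (0:ℚ) < (1-μ)^2 * n := by positivity
  have hceil1 : (⌈(I:ℚ)/μ⌉₊ + 1 : ℕ) ≤ n := le_trans (le_max_left _ _) hn
  have hIM : I ≤ M := by
    have h1 : ((I:ℚ)/μ) ≤ (n:ℚ) := by
      calc ((I:ℚ)/μ) ≤ (⌈(I:ℚ)/μ⌉₊ : ℚ) := Nat.le_ceil _
        _ ≤ (n:ℚ) := Nat.cast_le.mpr (by omega)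
    have : (I:ℚ) ≤ (M:ℚ) := by
      rw [hM]; rw [div_le_iff₀ hμ0] at h1; linarith
    exact_mod_cast this
  have hceil2 : (⌈2*(I:ℚ)^4/(ε*(1-μ)^2)⌉₊ + 1 : ℕ) ≤ n := le_trans (le_max_right _ _) hn
  have hhead : (I:ℚ)^4 / ((1-μ)^2 * n) < ε/2 := by
    have h1 : 2*(I:ℚ)^4/(ε*(1-μ)^2) < (n:ℚ) := by
      calc 2*(I:ℚ)^4/(ε*(1-μ)^2) ≤ (⌈2*(I:ℚ)^4/(ε*(1-μ)^2)⌉₊ : ℚ) := Nat.le_ceil _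
        _ < (n:ℚ) := Nat.cast_lt.mpr (by omega)
    rw [div_lt_iff₀ hc]
    rw [div_lt_iff₀ (by positivity : (0:ℚ) < ε*(1-μ)^2)] at h1
    nlinarith
  have hb := Rq_bounds μ hμ0 hμ2 n M hn1 hM
  rw [← hrdef] at hb
  clear_value r
  set B := ∑ i ∈ range M, ((i:ℚ)+1) * Rq n M (i+1) with hB
  set S1 := ∑ i ∈ range I, ((i:ℚ)+1) * (r^(i+1) - Rq n M (i+1)) with hS1
  set S2 := ∑ i ∈ Finset.Ico I M, ((i:ℚ)+1) * (r^(i+1) - Rq n M (i+1)) with hS2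
  have hsplit : S1 + S2 = ∑ i ∈ range M, ((i:ℚ)+1) * (r^(i+1) - Rq n M (i+1)) :=
    Finset.sum_range_add_sum_Ico _ hIM
  have e1 : ∑ i ∈ range M, ((i:ℚ)+1) * (r^(i+1) - Rq n M (i+1))
      = ∑ i ∈ range M, ((i:ℚ)+1) * r^(i+1) - B := by
    rw [hB, ← Finset.sum_sub_distrib]
    apply Finset.sum_congr rfl
    intro i _
    ring
  set G := ∑ i ∈ range M, ((i:ℚ)+1) * r^(i+1) with hG
  have hg := geom2 r M
  rw [← hG] at hg
  have hT' : (μ*(1-μ)/(1-2*μ)^2 - G) * (1-r)^2 = ((M:ℚ)+1)*r^(M+1) - M*r^(M+2) := by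
    rw [hβ, sub_mul, div_mul_cancel₀ _ (pow_ne_zero 2 h1r.ne')]
    linear_combination -hg
  have hT : μ*(1-μ)/(1-2*μ)^2 - G = (((M:ℚ)+1)*r^(M+1) - M*r^(M+2))/(1-r)^2 :=
    (eq_div_iff (pow_ne_zero 2 h1r.ne')).mpr hT'
  have hnum0 : (0:ℚ) ≤ ((M:ℚ)+1)*r^(M+1) - M*r^(M+2) := by
    have hp : (0:ℚ) ≤ r^(M+1) := by positivity
    have hm0 : (0:ℚ) ≤ (M:ℚ) := Nat.cast_nonneg M
    have h5 : (M:ℚ)*r^(M+2) ≤ (M:ℚ)*r^(M+1) :=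
      mul_le_mul_of_nonneg_left
        (pow_le_pow_of_le_one hr0.le hr1.le (by omega)) hm0
    linarith
  have hT0 : (0:ℚ) ≤ (((M:ℚ)+1)*r^(M+1) - M*r^(M+2))/(1-r)^2 := by positivity
  have hTb : (((M:ℚ)+1)*r^(M+1) - M*r^(M+2))/(1-r)^2 ≤ C*s^I/(1-r)^2 := by
    rw [div_le_div_iff_of_pos_right (show (0:ℚ) < (1-r)^2 by positivity)]
    have h5 : ((M+1:ℕ):ℚ) * r^(M+1) ≤ C * s^(M+1) := hkb (M+1)
    have h6 : C * s^(M+1) ≤ C * s^I :=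
      mul_le_mul_of_nonneg_left
        (pow_le_pow_of_le_one hs0.le hs1.le (by omega)) hC0.le
    have h7 : (0:ℚ) ≤ (M:ℚ)*r^(M+2) := by positivity
    push_cast at h5
    linarith
  have hS1b : S1 ≤ (I:ℚ)^4 / ((1-μ)^2*n) := by
    calc S1 ≤ ∑ _i ∈ range I, (I:ℚ)^3/((1-μ)^2*n) := by
          apply Finset.sum_le_sum
          intro i hi
          rw [Finset.mem_range] at hi
          have h2 := (hb (i+1) (by omega)).2.2
          have h3 : ((i+1:ℕ):ℚ) ≤ (I:ℚ) := by exact_mod_cast (by omega : i+1 ≤ I)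
          have h4 : (0:ℚ) ≤ ((i+1:ℕ):ℚ) := by positivity
          have h8 : (0:ℚ) ≤ r^(i+1) - Rq n M (i+1) := by
            have := (hb (i+1) (by omega)).2.1; linarith
          calc ((i:ℚ)+1) * (r^(i+1) - Rq n M (i+1))
              ≤ (I:ℚ) * (((i+1:ℕ):ℚ)^2/((1-μ)^2*n)) := by
                have h9 : ((i:ℚ)+1) * (r^(i+1) - Rq n M (i+1))
                    ≤ (I:ℚ) * (r^(i+1) - Rq n M (i+1)) := by
                  apply mul_le_mul_of_nonneg_right ?_ h8
                  push_cast at h3 ⊢; linarith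
                have h10 : (I:ℚ) * (r^(i+1) - Rq n M (i+1))
                    ≤ (I:ℚ) * (((i+1:ℕ):ℚ)^2/((1-μ)^2*n)) := by
                  apply mul_le_mul_of_nonneg_left ?_ (by positivity)
                  push_cast at h2 ⊢; linarith
                linarith
            _ ≤ (I:ℚ)^3/((1-μ)^2*n) := by
                have e9 : (I:ℚ)^3/((1-μ)^2*n) = (I:ℚ) * ((I:ℚ)^2/((1-μ)^2*n)) := by
                  ring
                rw [e9]
                apply mul_le_mul_of_nonneg_left ?_ (Nat.cast_nonneg (α := ℚ) I)
                rw [div_le_div_iff_of_pos_right hc]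
                exact pow_le_pow_left₀ h4 h3 2
      _ = (I:ℚ)^4 / ((1-μ)^2*n) := by
          rw [Finset.sum_const, Finset.card_range, nsmul_eq_mul]
          field_simp
  have hS2b : S2 ≤ C * (s^(I+1)/(1-s)) := by
    calc S2 ≤ ∑ i ∈ Finset.Ico I M, C * s^(i+1) := by
          apply Finset.sum_le_sum
          intro i _
          have hRq := Rq_nonneg n M (i+1)
          have h5 : ((i+1:ℕ):ℚ) * r^(i+1) ≤ C * s^(i+1) := hkb (i+1)
          push_cast at h5
          have h6 : (0:ℚ) ≤ ((i:ℚ)+1) := by positivity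
          calc ((i:ℚ)+1) * (r^(i+1) - Rq n M (i+1))
              = ((i:ℚ)+1) * r^(i+1) - ((i:ℚ)+1) * Rq n M (i+1) := by ring
            _ ≤ C * s^(i+1) := by linarith [mul_nonneg h6 hRq]
      _ = C * ∑ i ∈ Finset.Ico I M, s^(i+1) := by rw [Finset.mul_sum]
      _ ≤ C * (s^(I+1)/(1-s)) :=
          mul_le_mul_of_nonneg_left (geom_tail s hs0.le hs1 I M hIM) hC0.le
  have hS10 : 0 ≤ S1 := by
    apply Finset.sum_nonneg
    intro i hi
    rw [Finset.mem_range] at hi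
    have := (hb (i+1) (by omega)).2.1
    have h4 : (0:ℚ) ≤ (i:ℚ)+1 := by positivity
    exact mul_nonneg h4 (by linarith)
  have hS20 : 0 ≤ S2 := by
    apply Finset.sum_nonneg
    intro i hi
    rw [Finset.mem_Ico] at hi
    have := (hb (i+1) (by omega)).2.1
    have h4 : (0:ℚ) ≤ (i:ℚ)+1 := by positivity
    exact mul_nonneg h4 (by linarith)
  have hkey : μ*(1-μ)/(1-2*μ)^2 - B
      = S1 + S2 + (((M:ℚ)+1)*r^(M+1) - M*r^(M+2))/(1-r)^2 := by
    linear_combination hT - hsplit - e1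
  rw [abs_sub_comm, abs_of_nonneg (by linarith)]
  linarith

lemma dim_eq_R (n m i : ℕ) (hmn : m ≤ n) (hi : i < min m (n-m)) :
    dimPMF n m (min m (n-m) - i)
      = Rq n (min m (n-m)) i - Rq n (min m (n-m)) (i+1) := by
  rw [dimPMF, if_pos (by omega : min m (n-m) - i ≤ min m (n - m)),
    if_neg (by omega : ¬ (min m (n-m) - i = 0)), ← choose_min_eq n m hmn, sub_div]
  simp only [Rq]
  rw [Nat.sub_sub]

lemma M_eq (ξ : ℚ) (h0 : 0 < ξ) (h1 : ξ < 1) (n m : ℕ) (hm : (m:ℚ) = n * ξ) :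
    m ≤ n ∧ ((min m (n - m) : ℕ) : ℚ) = n * min ξ (1 - ξ) := by
  have hn0 : (0:ℚ) ≤ (n:ℚ) := Nat.cast_nonneg n
  have hmn : m ≤ n := by
    have : (m:ℚ) ≤ (n:ℚ) := by rw [hm]; nlinarith
    exact_mod_cast this
  refine ⟨hmn, ?_⟩
  rcases le_total ξ (1-ξ) with h | h
  · have h2 : 2*(m:ℚ) ≤ (n:ℚ) := by rw [hm]; nlinarith
    have h2' : 2*m ≤ n := by exact_mod_cast h2
    rw [min_eq_left (by omega : m ≤ n - m), min_eq_left h, hm]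
  · have h2 : (n:ℚ) ≤ 2*(m:ℚ) := by rw [hm]; nlinarith
    have h2' : n ≤ 2*m := by exact_mod_cast h2
    rw [min_eq_right (by omega : n - m ≤ m), min_eq_right h, Nat.cast_sub hmn, hm]
    ring

lemma P1_est (μ : ℚ) (hμ0 : 0 < μ) (hμ2 : μ < 1/2) (i : ℕ) (ε : ℚ) (hε : 0 < ε) :
    ∃ n₀ : ℕ, 1 ≤ n₀ ∧ ∀ n : ℕ, n₀ ≤ n → ∀ M : ℕ, (M:ℚ) = n * μ →
      i < M ∧ |(Rq n M i - Rq n M (i+1)) - ((μ/(1-μ))^i - (μ/(1-μ))^(i+1))| < ε := by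
  have h1μ : (0:ℚ) < 1 - μ := by linarith
  refine ⟨max (⌈((i:ℚ)+1)/μ⌉₊ + 1) (⌈((i:ℚ)^2+((i:ℚ)+1)^2)/(ε*(1-μ)^2)⌉₊ + 1),
    le_trans (by omega) (le_max_left _ _), ?_⟩
  intro n hn M hM
  have hn1 : 1 ≤ n := le_trans (le_trans (by omega) (le_max_left _ _)) hn
  have hnQ : (1:ℚ) ≤ (n:ℚ) := by exact_mod_cast hn1
  have hc : (0:ℚ) < (1-μ)^2 * n := by positivity
  have hceil1 : (⌈((i:ℚ)+1)/μ⌉₊ + 1 : ℕ) ≤ n := le_trans (le_max_left _ _) hn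
  have hiM : i + 1 ≤ M := by
    have h1 : (((i:ℚ)+1)/μ) ≤ (n:ℚ) := by
      calc (((i:ℚ)+1)/μ) ≤ (⌈((i:ℚ)+1)/μ⌉₊ : ℚ) := Nat.le_ceil _
        _ ≤ (n:ℚ) := Nat.cast_le.mpr (by omega)
    have : ((i:ℚ)+1) ≤ (M:ℚ) := by
      rw [hM]; rw [div_le_iff₀ hμ0] at h1; linarith
    exact_mod_cast this
  refine ⟨by omega, ?_⟩
  have hceil2 : (⌈((i:ℚ)^2+((i:ℚ)+1)^2)/(ε*(1-μ)^2)⌉₊ + 1 : ℕ) ≤ n := le_trans (le_max_right _ _) hn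
  have hhead : ((i:ℚ)^2+((i:ℚ)+1)^2) / ((1-μ)^2 * n) < ε := by
    have h1 : ((i:ℚ)^2+((i:ℚ)+1)^2)/(ε*(1-μ)^2) < (n:ℚ) := by
      calc ((i:ℚ)^2+((i:ℚ)+1)^2)/(ε*(1-μ)^2)
          ≤ (⌈((i:ℚ)^2+((i:ℚ)+1)^2)/(ε*(1-μ)^2)⌉₊ : ℚ) := Nat.le_ceil _
        _ < (n:ℚ) := Nat.cast_lt.mpr (by omega)
    rw [div_lt_iff₀ hc]
    rw [div_lt_iff₀ (by positivity : (0:ℚ) < ε*(1-μ)^2)] at h1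
    nlinarith
  have hb := Rq_bounds μ hμ0 hμ2 n M hn1 hM
  obtain ⟨e0, e1, e2⟩ := hb i (by omega)
  obtain ⟨f0, f1, f2⟩ := hb (i+1) (by omega)
  push_cast at e2 f2
  rw [abs_lt]
  constructor
  · have h10 : (i:ℚ)^2/((1-μ)^2*n) ≤ ((i:ℚ)^2+((i:ℚ)+1)^2) / ((1-μ)^2 * n) := by
      rw [div_le_div_iff_of_pos_right hc]
      nlinarith [sq_nonneg ((i:ℚ)+1)]
    linarith
  · have h10 : ((i:ℚ)+1)^2/((1-μ)^2*n) ≤ ((i:ℚ)^2+((i:ℚ)+1)^2) / ((1-μ)^2 * n) := by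
      rw [div_le_div_iff_of_pos_right hc]
      nlinarith [sq_nonneg ((i:ℚ))]
    linarith

/-- **Type II limit with `βδ = 0` and `ξ ≠ 1/2`**: with `μ = min(ξ, 1−ξ)`,
(i) `nμ − X` asymptotically obeys the geometric distribution with parameter
`μ/(1−μ)`, i.e. `p_n(nμ − i) → (μ/(1−μ))^i (1−2μ)/(1−μ)`;
(ii) `E[X] = nμ − μ/(1−2μ) + o(1)`;
(iii) `V[X] = μ(1−μ)/(1−2μ)² + o(1)`. -/
theorem typeII_bd_zero_geometric (ξ : ℚ) (h0 : 0 < ξ) (h1 : ξ < 1) (hne : ξ ≠ 1 / 2) :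
    let μ : ℚ := min ξ (1 - ξ)
    (∀ i : ℕ, ∀ ε : ℚ, 0 < ε → ∃ n₀ : ℕ, ∀ n : ℕ, n₀ ≤ n →
      ∀ m : ℕ, (m : ℚ) = (n : ℚ) * ξ →
        |dimPMF n m (min m (n - m) - i)
            - (μ / (1 - μ)) ^ i * ((1 - 2 * μ) / (1 - μ))| < ε)
    ∧ (∀ ε : ℚ, 0 < ε → ∃ n₀ : ℕ, ∀ n : ℕ, n₀ ≤ n →
      ∀ m : ℕ, (m : ℚ) = (n : ℚ) * ξ →
        |(∑ x ∈ Finset.range (n + 1), (x : ℚ) * dimPMF n m x)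
            - (n : ℚ) * μ + μ / (1 - 2 * μ)| < ε)
    ∧ (∀ ε : ℚ, 0 < ε → ∃ n₀ : ℕ, ∀ n : ℕ, n₀ ≤ n →
      ∀ m : ℕ, (m : ℚ) = (n : ℚ) * ξ →
        |(∑ x ∈ Finset.range (n + 1), (x : ℚ) ^ 2 * dimPMF n m x)
            - (∑ x ∈ Finset.range (n + 1), (x : ℚ) * dimPMF n m x) ^ 2
            - μ * (1 - μ) / (1 - 2 * μ) ^ 2| < ε) := by
  intro μ
  have hμdef : μ = min ξ (1 - ξ) := rfl
  have hμ0 : 0 < μ := by rw [hμdef]; exact lt_min h0 (by linarith)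
  have hμ2 : μ < 1/2 := by
    rcases lt_or_gt_of_ne hne with h | h
    · calc μ ≤ ξ := by rw [hμdef]; exact min_le_left _ _
        _ < 1/2 := h
    · calc μ ≤ 1 - ξ := by rw [hμdef]; exact min_le_right _ _
        _ < 1/2 := by linarith
  have h1μ : (0:ℚ) < 1 - μ := by linarith
  have h2μ : (0:ℚ) < 1 - 2*μ := by linarith
  refine ⟨?_, ?_, ?_⟩
  · -- part (i)
    intro i ε hε
    obtain ⟨n₀, _, H⟩ := P1_est μ hμ0 hμ2 i ε hε
    refine ⟨n₀, ?_⟩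
    intro n hn m hm
    obtain ⟨hmn, hMeq⟩ := M_eq ξ h0 h1 n m hm
    rw [← hμdef] at hMeq
    obtain ⟨hiM, hbound⟩ := H n hn (min m (n-m)) hMeq
    rw [dim_eq_R n m i hmn hiM]
    have e2 : 1 - μ/(1-μ) = (1-2*μ)/(1-μ) := by
      rw [eq_div_iff h1μ.ne', sub_mul, div_mul_cancel₀ _ h1μ.ne']
      ring
    have e : (μ/(1-μ))^i * ((1-2*μ)/(1-μ)) = (μ/(1-μ))^i - (μ/(1-μ))^(i+1) := by
      rw [← e2, pow_succ]
      ring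
    rw [e]
    exact hbound
  · -- part (ii)
    intro ε hε
    obtain ⟨n₀, _, H⟩ := A_est μ hμ0 hμ2 ε hε
    refine ⟨n₀, ?_⟩
    intro n hn m hm
    obtain ⟨hmn, hMeq⟩ := M_eq ξ h0 h1 n m hm
    rw [← hμdef] at hMeq
    have hA := H n hn (min m (n-m)) hMeq
    rw [moment1 n m hmn]
    have e : ((min m (n-m) : ℕ):ℚ) - (∑ x ∈ range (min m (n-m)), Rq n (min m (n-m)) (x+1))
          - (n:ℚ) * μ + μ/(1-2*μ)
        = -((∑ x ∈ range (min m (n-m)), Rq n (min m (n-m)) (x+1)) - μ/(1-2*μ)) := by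
      rw [hMeq]; ring
    rw [e, abs_neg]
    exact hA
  · -- part (iii)
    intro ε hε
    set α : ℚ := μ/(1-2*μ) with hαdef
    have hα0 : 0 ≤ α := by positivity
    set δ : ℚ := min 1 (ε/(2*α+5)) with hδdef
    have h5' : (0:ℚ) < 2*α+5 := by linarith
    have hδ0 : 0 < δ := lt_min one_pos (by positivity)
    have hδ1 : δ ≤ 1 := min_le_left _ _
    have hδe : δ ≤ ε/(2*α+5) := min_le_right _ _
    have hfin : δ*(2*α+4) < ε := by
      have h6 : δ*(2*α+5) ≤ ε := (le_div_iff₀ h5').mp hδe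
      nlinarith
    obtain ⟨nA, _, HA⟩ := A_est μ hμ0 hμ2 δ hδ0
    obtain ⟨nB, _, HB⟩ := B_est μ hμ0 hμ2 δ hδ0
    refine ⟨max nA nB, ?_⟩
    intro n hn m hm
    obtain ⟨hmn, hMeq⟩ := M_eq ξ h0 h1 n m hm
    rw [← hμdef] at hMeq
    have hA := HA n (le_trans (le_max_left _ _) hn) (min m (n-m)) hMeq
    have hB := HB n (le_trans (le_max_right _ _) hn) (min m (n-m)) hMeq
    rw [← hαdef] at hA
    rw [moment1 n m hmn, moment2 n m hmn]
    set A := ∑ x ∈ range (min m (n-m)), Rq n (min m (n-m)) (x+1) with hAdef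
    set B := ∑ x ∈ range (min m (n-m)), ((x:ℚ)+1) * Rq n (min m (n-m)) (x+1) with hBdef
    set β : ℚ := μ*(1-μ)/(1-2*μ)^2 with hβdef
    have hβeq : β = α + α^2 := by
      rw [hβdef, hαdef, div_pow, div_add_div _ _ h2μ.ne' (pow_ne_zero 2 h2μ.ne'),
        div_eq_div_iff (pow_ne_zero 2 h2μ.ne') (by positivity)]
      ring
    clear_value α β
    have hE : ((min m (n-m):ℕ):ℚ)^2 - (2*((min m (n-m):ℕ):ℚ)+1) * A + 2*B
          - (((min m (n-m):ℕ):ℚ) - A)^2 - β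
        = 2*(B - β) - (A - α) - (A - α)*(A + α) := by
      rw [hβeq]; ring
    rw [hE]
    have t0 : |A + α| ≤ 2*α + 1 := by
      have e7 : A + α = (A - α) + 2*α := by ring
      rw [e7]
      calc |(A - α) + 2*α| ≤ |A - α| + |2*α| := abs_add_le _ _
        _ ≤ 2*α + 1 := by
            rw [abs_of_nonneg (by linarith : (0:ℚ) ≤ 2*α)]
            linarith [hA, abs_nonneg (A - α)]
    have t1 : |(A - α)*(A + α)| ≤ δ*(2*α+1) := by
      rw [abs_mul]
      exact mul_le_mul hA.le t0 (abs_nonneg _) hδ0.le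
    have t2 : |2*(B - β) - (A - α) - (A - α)*(A + α)|
        ≤ |2*(B-β)| + |A - α| + |(A - α)*(A + α)| := by
      calc |2*(B - β) - (A - α) - (A - α)*(A + α)|
          ≤ |2*(B - β) - (A - α)| + |(A - α)*(A + α)| := abs_sub _ _
        _ ≤ |2*(B-β)| + |A - α| + |(A - α)*(A + α)| := by
            linarith [abs_sub (2*(B-β)) (A - α)]
    have t3 : |2*(B-β)| = 2*|B-β| := by
      rw [abs_mul, abs_two]
    linarith [hA, hB]
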